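/- Let g, Δx ≠ 0, A₁, A₂, A₃ ∈ ℝ and define p(x) = A₁x² + A₂x + A₃, ρ(x) = (2A₁x + A₂)/g. Then for any grid x_{i+1/2} = (i+1/2)Δx with cell centers x_i = iΔx, the point values p_{i±1/2} = p(x_{i±1/2}), ρ_{i±1/2} = ρ(x_{i±1/2}) and cell averages p̄_i = (1/Δx)∫_{x_{i−1/2}}^{x_{i+1/2}} p dx, ρ̄_i = (1/Δx)∫_{x_{i−1/2}}^{x_{i+1/2}} ρ dx satisfy the discrete well-balance relations: ρ̄_i = (ρ_{i+1/2}+ρ_{i−1/2})/2, (p_{i+1/2}−p_{i−1/2})/Δx = g(ρ_{i−1/2}+ρ_{i+1/2})/2, and (p̄_{i+1}−p̄_i)/Δx = g(ρ_{i+3/2}+4ρ_{i+1/2}+ρ_{i−1/2})/6. -/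
import Mathlib

lemma quad_integral (A₁ A₂ A₃ a b : ℝ) :
    (∫ x in a..b, (A₁ * x ^ 2 + A₂ * x + A₃))
      = A₁ * (b ^ 3 - a ^ 3) / 3 + A₂ * (b ^ 2 - a ^ 2) / 2 + A₃ * (b - a) := by
  have h1 : IntervalIntegrable (fun x : ℝ => A₁ * x ^ 2) MeasureTheory.volume a b :=
    (continuous_const.mul (continuous_pow 2)).intervalIntegrable a b
  have h2 : IntervalIntegrable (fun x : ℝ => A₂ * x) MeasureTheory.volume a b :=
    (continuous_const.mul continuous_id).intervalIntegrable a b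
  have h3 : IntervalIntegrable (fun _ : ℝ => A₃) MeasureTheory.volume a b :=
    intervalIntegrable_const
  rw [intervalIntegral.integral_add (h1.add h2) h3,
      intervalIntegral.integral_add h1 h2,
      intervalIntegral.integral_const_mul, intervalIntegral.integral_const_mul,
      integral_pow, integral_id,
      intervalIntegral.integral_const]
  simp only [smul_eq_mul]; ring

lemma lin_integral (A₁ A₂ g a b : ℝ) :
    (∫ x in a..b, (2 * A₁ * x + A₂) / g)
      = (A₁ * (b ^ 2 - a ^ 2) + A₂ * (b - a)) / g := by
  have h1 : IntervalIntegrable (fun x : ℝ => 2 * A₁ * x) MeasureTheory.volume a b :=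
    (continuous_const.mul continuous_id).intervalIntegrable a b
  have h3 : IntervalIntegrable (fun _ : ℝ => A₂) MeasureTheory.volume a b :=
    intervalIntegrable_const
  simp only [div_eq_mul_inv]
  rw [intervalIntegral.integral_mul_const,
      intervalIntegral.integral_add h1 h3,
      intervalIntegral.integral_const_mul, integral_id,
      intervalIntegral.integral_const]
  simp only [smul_eq_mul]; ring

/-- A hydrostatic state with quadratic pressure p = A₁x² + A₂x + A₃ and linear
density ρ = (2A₁x + A₂)/g, sampled into point values and cell averages on a uniform
grid, satisfies the discrete well-balance relations of the Active Flux scheme. -/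
theorem stmt_16 (g Δx A₁ A₂ A₃ : ℝ) (hg : g ≠ 0) (hΔx : Δx ≠ 0)
    (p ρ : ℝ → ℝ)
    (hp : p = fun x => A₁ * x ^ 2 + A₂ * x + A₃)
    (hρ : ρ = fun x => (2 * A₁ * x + A₂) / g)
    (xh : ℤ → ℝ) (hxh : xh = fun (i : ℤ) => ((i : ℝ) + 1 / 2) * Δx)
    (pbar ρbar : ℤ → ℝ)
    (hpbar : pbar = fun i => (1 / Δx) * ∫ x in (xh (i - 1))..(xh i), p x)
    (hρbar : ρbar = fun i => (1 / Δx) * ∫ x in (xh (i - 1))..(xh i), ρ x) :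
    ∀ i : ℤ,
      ρbar i = (ρ (xh i) + ρ (xh (i - 1))) / 2 ∧
      (p (xh i) - p (xh (i - 1))) / Δx = g * (ρ (xh (i - 1)) + ρ (xh i)) / 2 ∧
      (pbar (i + 1) - pbar i) / Δx
        = g * (ρ (xh (i + 1)) + 4 * ρ (xh i) + ρ (xh (i - 1))) / 6 := by
  intro i
  subst hp hρ hxh hpbar hρbar
  simp only [quad_integral, lin_integral]
  push_cast
  refine ⟨?_, ?_, ?_⟩ <;> field_simp <;> ring
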